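/- With notation as in equation (12) of the paper (H the intersection matrix, i_k = k, all λ_k ≠ 1), for 0 ≤ k ≤ m: the (k, 0)-entry of H equals (λ_0-1)λ_{m+1}/(λ_0(λ_{m+1}-1)) for k ≥ 1, the (0, k)-entry equals (λ_k-1)/(λ_k(λ_{m+1}-1)) for k ≥ 1, and the (0,0)-entry equals 1 + (λ_0-1)/(λ_0(λ_{m+1}-1)) = (λ_0λ_{m+1}-1)/(λ_0(λ_{m+1}-1)). -/

import Mathlib

open Matrix Finset

/-- Proof of Proposition 3.1: the first-row and first-column entries of the
intersection matrix H of equation (12) (case i_k = k, all λ_k ≠ 1). -/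
theorem stmt_10 (m : ℕ) (l : ℕ → ℂ)
    (hl0 : ∀ i ≤ m + 1, l i ≠ 0)
    (hlm1 : l (m + 1) ≠ 1)
    (hall : ∀ k ≤ m, l k ≠ 1)
    (H : Matrix (Fin (m + 1)) (Fin (m + 1)) ℂ)
    (hH : H = 1 + (l (m + 1) - 1)⁻¹ •
      ((Matrix.of fun j k : Fin (m + 1) => if (j : ℕ) ≤ (k : ℕ) then 1 else l (m + 1)) *
        Matrix.diagonal (fun k : Fin (m + 1) => (l (k : ℕ) - 1) / l (k : ℕ)))) :
    (∀ k : Fin (m + 1), 1 ≤ (k : ℕ) →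
        H k 0 = (l 0 - 1) * l (m + 1) / (l 0 * (l (m + 1) - 1))) ∧
    (∀ k : Fin (m + 1), 1 ≤ (k : ℕ) →
        H 0 k = (l (k : ℕ) - 1) / (l (k : ℕ) * (l (m + 1) - 1))) ∧
    H 0 0 = 1 + (l 0 - 1) / (l 0 * (l (m + 1) - 1)) ∧
    H 0 0 = (l 0 * l (m + 1) - 1) / (l 0 * (l (m + 1) - 1)) := by
  subst hH
  have h0 : l 0 ≠ 0 := hl0 0 (Nat.zero_le _)
  have hm : l (m + 1) ≠ 0 := hl0 (m + 1) le_rfl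
  have hs : l (m + 1) - 1 ≠ 0 := sub_ne_zero.mpr hlm1
  refine ⟨?_, ?_, ?_, ?_⟩
  · intro k hk
    have hk0 : k ≠ 0 := by
      intro h; subst h; simp at hk
    have hkn : ¬ (k : ℕ) ≤ ((0 : Fin (m+1)) : ℕ) := by
      simp only [Fin.val_zero]; omega
    simp only [Matrix.add_apply, Matrix.smul_apply, Matrix.mul_diagonal,
      Matrix.one_apply, Matrix.of_apply, if_neg hk0, if_neg hkn, smul_eq_mul]
    have : ((0 : Fin (m+1)) : ℕ) = 0 := rfl
    rw [this]
    field_simp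
    ring
  · intro k hk
    have hk0 : (0 : Fin (m+1)) ≠ k := by
      intro h; rw [← h] at hk; simp at hk
    have hkn : ((0 : Fin (m+1)) : ℕ) ≤ (k : ℕ) := Nat.zero_le _
    have hknz : l (k : ℕ) ≠ 0 := hl0 _ (le_trans (Nat.le_of_lt_succ k.isLt) (Nat.le_succ _))
    simp only [Matrix.add_apply, Matrix.smul_apply, Matrix.mul_diagonal,
      Matrix.one_apply, Matrix.of_apply, if_neg hk0, if_pos hkn, smul_eq_mul]
    field_simp
    try ring
    try tauto
  · simp only [Matrix.add_apply, Matrix.smul_apply, Matrix.mul_diagonal,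
      Matrix.one_apply, Matrix.of_apply, if_pos rfl, if_pos le_rfl, smul_eq_mul, if_true]
    have : ((0 : Fin (m+1)) : ℕ) = 0 := rfl
    rw [this]
    field_simp
  · simp only [Matrix.add_apply, Matrix.smul_apply, Matrix.mul_diagonal,
      Matrix.one_apply, Matrix.of_apply, if_pos rfl, if_pos le_rfl, smul_eq_mul, if_true]
    have : ((0 : Fin (m+1)) : ℕ) = 0 := rfl
    rw [this]
    field_simp
    ring
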